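/- arXiv:2305.12261 — 2 statements merged into one kernel-verified Lean document; each statement's English description precedes it below -/
import Mathlib

section
/- Let $G_\delta$, $G_{\delta,12}$, $G_{\delta,21}$ be $N\times N$ complex matrices with $G_\delta$ Hermitian ($G_\delta^\dagger = G_\delta$) and $G_{\delta,12}^\dagger = G_{\delta,21}$, and let $H_1$, $H_2$ be $M\times L$ complex matrices. Define the $2MN\times 2LN$ matrix $H = \begin{pmatrix} H_1\otimes G_\delta & H_2\otimes G_{\delta,12} \\ H_1\otimes G_{\delta,21} & H_2\otimes G_\delta \end{pmatrix}$ and the $2MN\times 2MN$ matrix $\Sigma_\Omega = \begin{pmatrix} I_M\otimes G_\delta & I_M\otimes G_{\delta,12} \\ I_M\otimes G_{\delta,21} & I_M\otimes G_\delta \end{pmatrix}$, and assume $\Sigma_\Omega$ is invertible. Then $H^\dagger \Sigma_\Omega^{-1} H = \begin{pmatrix} H_1^\dagger H_1\otimes G_\delta & H_1^\dagger H_2\otimes G_{\delta,12} \\ H_2^\dagger H_1\otimes G_{\delta,21} & H_2^\dagger H_2\otimes G_\delta \end{pmatrix}$. -/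
open Matrix
open scoped Kronecker

lemma kron_conjT {m n p q : Type*} (A : Matrix m n ℂ) (B : Matrix p q ℂ) :
    (A ⊗ₖ B)ᴴ = Aᴴ ⊗ₖ Bᴴ := by
  ext i j
  simp [Matrix.conjTranspose_apply, StarMul.star_mul, mul_comm]

/-- Simplification of `Hᴴ Σ_Ω⁻¹ H` for the MIMO aMAC FTN channel matrix. -/
theorem stmt_2 (M L N : ℕ)
    (Gδ G12 G21 : Matrix (Fin N) (Fin N) ℂ)
    (hGδ : Gδᴴ = Gδ) (hG12 : G12ᴴ = G21)
    (H1 H2 : Matrix (Fin M) (Fin L) ℂ)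
    (hSig : IsUnit (Matrix.fromBlocks
      ((1 : Matrix (Fin M) (Fin M) ℂ) ⊗ₖ Gδ) ((1 : Matrix (Fin M) (Fin M) ℂ) ⊗ₖ G12)
      ((1 : Matrix (Fin M) (Fin M) ℂ) ⊗ₖ G21) ((1 : Matrix (Fin M) (Fin M) ℂ) ⊗ₖ Gδ)).det) :
    (Matrix.fromBlocks (H1 ⊗ₖ Gδ) (H2 ⊗ₖ G12) (H1 ⊗ₖ G21) (H2 ⊗ₖ Gδ))ᴴ *
      (Matrix.fromBlocks
        ((1 : Matrix (Fin M) (Fin M) ℂ) ⊗ₖ Gδ) ((1 : Matrix (Fin M) (Fin M) ℂ) ⊗ₖ G12)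
        ((1 : Matrix (Fin M) (Fin M) ℂ) ⊗ₖ G21) ((1 : Matrix (Fin M) (Fin M) ℂ) ⊗ₖ Gδ))⁻¹ *
      Matrix.fromBlocks (H1 ⊗ₖ Gδ) (H2 ⊗ₖ G12) (H1 ⊗ₖ G21) (H2 ⊗ₖ Gδ) =
    Matrix.fromBlocks
      ((H1ᴴ * H1) ⊗ₖ Gδ) ((H1ᴴ * H2) ⊗ₖ G12)
      ((H2ᴴ * H1) ⊗ₖ G21) ((H2ᴴ * H2) ⊗ₖ Gδ) := by
  set S := Matrix.fromBlocks
      ((1 : Matrix (Fin M) (Fin M) ℂ) ⊗ₖ Gδ) ((1 : Matrix (Fin M) (Fin M) ℂ) ⊗ₖ G12)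
      ((1 : Matrix (Fin M) (Fin M) ℂ) ⊗ₖ G21) ((1 : Matrix (Fin M) (Fin M) ℂ) ⊗ₖ Gδ)
    with hS
  set K := Matrix.fromBlocks (H1 ⊗ₖ (1 : Matrix (Fin N) (Fin N) ℂ)) 0 0
      (H2 ⊗ₖ (1 : Matrix (Fin N) (Fin N) ℂ)) with hK
  have hG21 : G21ᴴ = G12 := by rw [← hG12, conjTranspose_conjTranspose]
  have hSherm : Sᴴ = S := by
    simp [hS, Matrix.fromBlocks_conjTranspose, kron_conjT,
      hGδ, hG12, hG21]
  have hH : Matrix.fromBlocks (H1 ⊗ₖ Gδ) (H2 ⊗ₖ G12) (H1 ⊗ₖ G21) (H2 ⊗ₖ Gδ) = S * K := by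
    simp [hS, hK, Matrix.fromBlocks_multiply, ← Matrix.mul_kronecker_mul]
  rw [hH, Matrix.conjTranspose_mul, Matrix.mul_assoc, Matrix.mul_assoc, hSherm,
    ← Matrix.mul_assoc S⁻¹, Matrix.nonsing_inv_mul S hSig, Matrix.one_mul,
    ← Matrix.mul_assoc]
  simp [hS, hK, Matrix.fromBlocks_conjTranspose, Matrix.fromBlocks_multiply,
    ← Matrix.mul_kronecker_mul, kron_conjT,
    Matrix.mul_assoc]
end

section
/- Let $G_\delta$, $G_{\delta,12}$, $G_{\delta,21}$ be $N\times N$ complex matrices with $G_\delta$ Hermitian ($G_\delta^\dagger = G_\delta$) and $G_{\delta,12}^\dagger = G_{\delta,21}$, let $H_1$, $H_2$ be $M\times L$ complex matrices, let $H = \begin{pmatrix} H_1\otimes G_\delta & H_2\otimes G_{\delta,12} \\ H_1\otimes G_{\delta,21} & H_2\otimes G_\delta \end{pmatrix}$ (a $2MN\times 2LN$ matrix), and let $\Sigma_\Omega = \begin{pmatrix} I_M\otimes G_\delta & I_M\otimes G_{\delta,12} \\ I_M\otimes G_{\delta,21} & I_M\otimes G_\delta \end{pmatrix}$ be invertible.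 Then for any $LN\times LN$ complex matrices $\Sigma_{A1}$, $\Sigma_{A2}$, $\det\Big(I_{2MN} + \Sigma_\Omega^{-1} H \begin{pmatrix} \Sigma_{A1} & 0 \\ 0 & \Sigma_{A2} \end{pmatrix} H^\dagger\Big) = \det\Big(I_{2LN} + \begin{pmatrix} H_1^\dagger H_1\otimes G_\delta & H_1^\dagger H_2\otimes G_{\delta,12} \\ H_2^\dagger H_1\otimes G_{\delta,21} & H_2^\dagger H_2\otimes G_\delta \end{pmatrix} \begin{pmatrix} \Sigma_{A1} & 0 \\ 0 & \Sigma_{A2} \end{pmatrix}\Big)$. -/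
open Matrix
open scoped Kronecker

/-- Determinant identity used to simplify the sum-rate mutual information expression. -/
theorem stmt_3 (M L N : ℕ)
    (Gδ G12 G21 : Matrix (Fin N) (Fin N) ℂ)
    (hGδ : Gδᴴ = Gδ) (hG12 : G12ᴴ = G21)
    (H1 H2 : Matrix (Fin M) (Fin L) ℂ)
    (hSig : IsUnit (Matrix.fromBlocks
      ((1 : Matrix (Fin M) (Fin M) ℂ) ⊗ₖ Gδ) ((1 : Matrix (Fin M) (Fin M) ℂ) ⊗ₖ G12)
      ((1 : Matrix (Fin M) (Fin M) ℂ) ⊗ₖ G21) ((1 : Matrix (Fin M) (Fin M) ℂ) ⊗ₖ Gδ)).det)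
    (SA1 SA2 : Matrix (Fin L × Fin N) (Fin L × Fin N) ℂ) :
    (1 + (Matrix.fromBlocks
        ((1 : Matrix (Fin M) (Fin M) ℂ) ⊗ₖ Gδ) ((1 : Matrix (Fin M) (Fin M) ℂ) ⊗ₖ G12)
        ((1 : Matrix (Fin M) (Fin M) ℂ) ⊗ₖ G21) ((1 : Matrix (Fin M) (Fin M) ℂ) ⊗ₖ Gδ))⁻¹ *
      (Matrix.fromBlocks (H1 ⊗ₖ Gδ) (H2 ⊗ₖ G12) (H1 ⊗ₖ G21) (H2 ⊗ₖ Gδ)) *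
      Matrix.fromBlocks SA1 0 0 SA2 *
      (Matrix.fromBlocks (H1 ⊗ₖ Gδ) (H2 ⊗ₖ G12) (H1 ⊗ₖ G21) (H2 ⊗ₖ Gδ))ᴴ).det =
    (1 + Matrix.fromBlocks
        ((H1ᴴ * H1) ⊗ₖ Gδ) ((H1ᴴ * H2) ⊗ₖ G12)
        ((H2ᴴ * H1) ⊗ₖ G21) ((H2ᴴ * H2) ⊗ₖ Gδ) *
      Matrix.fromBlocks SA1 0 0 SA2).det := by
  have hG21 : G21ᴴ = G12 := by rw [← hG12, conjTranspose_conjTranspose]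
  set B : Matrix ((Fin M × Fin N) ⊕ (Fin M × Fin N)) ((Fin L × Fin N) ⊕ (Fin L × Fin N)) ℂ :=
    Matrix.fromBlocks (H1 ⊗ₖ (1 : Matrix (Fin N) (Fin N) ℂ)) 0 0
      (H2 ⊗ₖ (1 : Matrix (Fin N) (Fin N) ℂ)) with hB
  have hfact : (Matrix.fromBlocks
      ((1 : Matrix (Fin M) (Fin M) ℂ) ⊗ₖ Gδ) ((1 : Matrix (Fin M) (Fin M) ℂ) ⊗ₖ G12)
      ((1 : Matrix (Fin M) (Fin M) ℂ) ⊗ₖ G21) ((1 : Matrix (Fin M) (Fin M) ℂ) ⊗ₖ Gδ)) * B =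
      Matrix.fromBlocks (H1 ⊗ₖ Gδ) (H2 ⊗ₖ G12) (H1 ⊗ₖ G21) (H2 ⊗ₖ Gδ) := by
    simp [hB, Matrix.fromBlocks_multiply, ← Matrix.mul_kronecker_mul]
  have hinv : (Matrix.fromBlocks
      ((1 : Matrix (Fin M) (Fin M) ℂ) ⊗ₖ Gδ) ((1 : Matrix (Fin M) (Fin M) ℂ) ⊗ₖ G12)
      ((1 : Matrix (Fin M) (Fin M) ℂ) ⊗ₖ G21) ((1 : Matrix (Fin M) (Fin M) ℂ) ⊗ₖ Gδ))⁻¹ *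
      Matrix.fromBlocks (H1 ⊗ₖ Gδ) (H2 ⊗ₖ G12) (H1 ⊗ₖ G21) (H2 ⊗ₖ Gδ) = B := by
    rw [← hfact, ← Matrix.mul_assoc, Matrix.nonsing_inv_mul _ hSig, Matrix.one_mul]
  have hK : (Matrix.fromBlocks (H1 ⊗ₖ Gδ) (H2 ⊗ₖ G12) (H1 ⊗ₖ G21) (H2 ⊗ₖ Gδ))ᴴ * B =
      Matrix.fromBlocks
        ((H1ᴴ * H1) ⊗ₖ Gδ) ((H1ᴴ * H2) ⊗ₖ G12)
        ((H2ᴴ * H1) ⊗ₖ G21) ((H2ᴴ * H2) ⊗ₖ Gδ) := by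
    simp [hB, Matrix.fromBlocks_conjTranspose, kron_conjT, Matrix.fromBlocks_multiply,
      ← Matrix.mul_kronecker_mul, hGδ, hG12, hG21]
  rw [hinv, Matrix.mul_assoc, Matrix.det_one_add_mul_comm, Matrix.mul_assoc, hK]
  exact Matrix.det_one_add_mul_comm _ _
end
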